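/- The Riesz representation map Ψ : L^2(T) → Ê defined by Ψ(f)(g) = T(fg) restricts to a bijection between the positive cone of L^2(T) and the positive cone of Ê; consequently Ψ and Ψ^{-1} are lattice isomorphisms: Ψ(f)^± = Ψ(f^±), Ψ(f ∨ g) = Ψ(f) ∨ Ψ(g) and Ψ(f ∧ g) = Ψ(f) ∧ Ψ(g) for all f, g ∈ L^2(T). -/

import Mathlib

/-!
Common setup.  `E` models the universal completion `E_u` of the `T`-universally
complete Riesz space `L¹(T)`: a Dedekind complete (conditionally complete)
`f`-algebra whose multiplicative unit `1 = e = Te` is a weak order unit.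
`T : E → E` models the strictly positive conditional expectation operator,
`L1 ⊆ E` its natural domain `L¹(T)`, `L2 L1` the space `L²(T)` and `RT T` the
range `R(T)` of `T`.
-/

variable {E : Type*}

/-- The range `R(T)` of the conditional expectation operator. -/
def RT (T : E → E) : Set E := Set.range T

/-- `L²(T) = {f ∈ L¹(T) : f² ∈ L¹(T)}`, the product taken in the `f`-algebra `E_u`. -/
def L2 [Mul E] (L1 : Set E) : Set E := {f | f ∈ L1 ∧ f * f ∈ L1}

variable [CommRing E] [ConditionallyCompleteLattice E]

/-- `T` is a strictly positive conditional expectation operator on the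
`T`-universally complete space `L¹(T)` (modelled by the set `L1` inside the
Dedekind complete `f`-algebra `E`), with `1 = e = Te` a weak order unit. -/
structure IsCondExp (T : E → E) (L1 : Set E) : Prop where
  /-- compatibility of the order with addition -/
  addLe : ∀ a b c : E, a ≤ b → a + c ≤ b + c
  /-- products of positive elements are positive -/
  mulPos : ∀ a b : E, 0 ≤ a → 0 ≤ b → 0 ≤ a * b
  /-- the `f`-algebra property -/
  fAlg : ∀ a b c : E, a ⊓ b = 0 → 0 ≤ c → (c * a) ⊓ b = 0
  /-- `1 = e` is a weak order unit -/
  weakUnit : ∀ x : E, 0 ≤ x → x ⊓ 1 = 0 → x = 0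
  /-- `T` is additive -/
  addT : ∀ a b : E, T (a + b) = T a + T b
  /-- `T` is positive -/
  posT : ∀ a : E, 0 ≤ a → 0 ≤ T a
  /-- `T` is strictly positive -/
  strictT : ∀ a : E, 0 ≤ a → T a = 0 → a = 0
  /-- `T` is a projection -/
  projT : ∀ a : E, T (T a) = T a
  /-- `T` maps the weak order unit `e = 1` to itself -/
  unitT : T 1 = 1
  /-- `T` is an averaging operator: `T(T a · b) = T a · T b` -/
  avgT : ∀ a b : E, T (T a * b) = T a * T b
  /-- `T` is order continuous -/
  ordContT : ∀ S : Set E, S.Nonempty → DirectedOn (· ≥ ·) S → (∀ x ∈ S, 0 ≤ x) →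
      IsGLB S 0 → IsGLB (T '' S) 0
  /-- `L¹(T)` is closed under addition -/
  l1add : ∀ a ∈ L1, ∀ b ∈ L1, a + b ∈ L1
  /-- `L¹(T)` is solid -/
  l1sol : ∀ a ∈ L1, ∀ b : E, |b| ≤ |a| → b ∈ L1
  /-- `R(T) ⊆ L¹(T)` and `T` maps `L¹(T)` into itself -/
  rtL1 : ∀ a : E, T a ∈ L1
  /-- `L²(T)` is an `R(T)`-module -/
  l2mod : ∀ α ∈ RT T, ∀ x ∈ L2 L1, α * x ∈ L2 L1
  /-- `T`-universal completeness of `L¹(T)` -/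
  tuc : ∀ S : Set E, S.Nonempty → (∀ x ∈ S, 0 ≤ x ∧ x ∈ L1) → DirectedOn (· ≤ ·) S →
      BddAbove (T '' S) → BddAbove S ∧ sSup S ∈ L1

/-- `sqrt` is a square-root function on the positive cone of the `f`-algebra. -/
def IsSqrt (sqrt : E → E) : Prop := ∀ a : E, 0 ≤ a → 0 ≤ sqrt a ∧ sqrt a * sqrt a = a

/-- The `R(T)`-valued norm `‖f‖_{T,2} = (T (f²))^{1/2}` on `L²(T)`. -/
def nrm (T : E → E) (sqrt : E → E) (f : E) : E := sqrt (T (f * f))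

/-- A `T`-linear functional on `E = L²(T)`: `R(T)`-valued, additive,
`R(T)`-homogeneous and order bounded.  The set of these is the `T`-dual `E*`. -/
def TLinear (T : E → E) (L1 : Set E) (F : E → E) : Prop :=
  (∀ x ∈ L2 L1, F x ∈ RT T) ∧
  (∀ x ∈ L2 L1, ∀ y ∈ L2 L1, F (x + y) = F x + F y) ∧
  (∀ α ∈ RT T, ∀ x ∈ L2 L1, F (α * x) = α * F x) ∧
  (∀ x ∈ L2 L1, 0 ≤ x → ∃ b : E, ∀ y ∈ L2 L1, |y| ≤ x → |F y| ≤ b)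

/-- `T`-strong boundedness: `|F x| ≤ k ‖x‖_{T,2}` for some `k ∈ R(T)₊`. -/
def StronglyBdd (T : E → E) (L1 : Set E) (sqrt : E → E) (F : E → E) : Prop :=
  ∃ k ∈ RT T, 0 ≤ k ∧ ∀ x ∈ L2 L1, |F x| ≤ k * nrm T sqrt x

/-- Membership in the `T`-strong dual `Ê` of `L²(T)`. -/
def MemEhat (T : E → E) (L1 : Set E) (sqrt : E → E) (F : E → E) : Prop :=
  TLinear T L1 F ∧ StronglyBdd T L1 sqrt F

/-- The Riesz representation map `Ψ(f)(g) = T (f g)`. -/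
def Psi (T : E → E) (f : E) : E → E := fun g => T (f * g)

/-- The Riesz–Kantorovich set `{F y + G z : y, z ∈ L²(T)₊, y + z = x}` whose
supremum is `(F ∨ G)(x)` and whose infimum is `(F ∧ G)(x)`. -/
def RKset (L1 : Set E) (F G : E → E) (x : E) : Set E :=
  {v | ∃ y z : E, y ∈ L2 L1 ∧ z ∈ L2 L1 ∧ 0 ≤ y ∧ 0 ≤ z ∧ y + z = x ∧ v = F y + G z}

/-- The partial order on functionals: `F ≤ G` iff `F x ≤ G x` for all `x ∈ L²(T)₊`. -/
def leF [Mul E] (L1 : Set E) (F G : E → E) : Prop := ∀ x ∈ L2 L1, 0 ≤ x → F x ≤ G x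


section Helpers

variable {T : E → E} {L1 : Set E}

theorem my_cov1 (hT : IsCondExp T L1) : CovariantClass E E (· + ·) (· ≤ ·) :=
  ⟨fun c a b h => by simpa [add_comm] using hT.addLe a b c h⟩

theorem my_cov2 (hT : IsCondExp T L1) : CovariantClass E E (Function.swap (· + ·)) (· ≤ ·) :=
  ⟨fun c a b h => hT.addLe a b c h⟩

theorem my_T0 (hT : IsCondExp T L1) : T 0 = 0 := by
  have h := hT.addT 0 0
  rw [add_zero] at h
  exact (left_eq_add.mp h)

theorem my_Tneg (hT : IsCondExp T L1) (a : E) : T (-a) = -T a := by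
  have h := hT.addT a (-a)
  rw [add_neg_cancel, my_T0 hT] at h
  exact eq_neg_of_add_eq_zero_right h.symm

theorem my_Tsub (hT : IsCondExp T L1) (a b : E) : T (a - b) = T a - T b := by
  rw [sub_eq_add_neg, hT.addT, my_Tneg hT, sub_eq_add_neg]

theorem my_Tmono (hT : IsCondExp T L1) {a b : E} (h : a ≤ b) : T a ≤ T b := by
  haveI := my_cov1 hT
  have h2 := hT.posT (b - a) (by rwa [sub_nonneg])
  rw [my_Tsub hT] at h2
  exact sub_nonneg.mp h2

theorem my_mul_le_mul (hT : IsCondExp T L1) {a b : E} (c : E) (hc : 0 ≤ c) (h : a ≤ b) :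
    c * a ≤ c * b := by
  haveI := my_cov1 hT
  have h2 := hT.mulPos c (b - a) hc (by rwa [sub_nonneg])
  rw [mul_sub] at h2
  exact sub_nonneg.mp h2

theorem my_mul_le_mul' (hT : IsCondExp T L1) {a b : E} (c : E) (hc : 0 ≤ c) (h : a ≤ b) :
    a * c ≤ b * c := by
  rw [mul_comm a c, mul_comm b c]; exact my_mul_le_mul hT c hc h

/-- orthogonality of positive and negative parts in the ring. -/
theorem my_orth (hT : IsCondExp T L1) (a : E) : (a ⊔ 0) * ((-a) ⊔ 0) = 0 := by
  haveI := my_cov1 hT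
  haveI := my_cov2 hT
  have h0 : (a ⊔ 0) ⊓ ((-a) ⊔ 0) = 0 := posPart_inf_negPart_eq_zero a
  have h1 := hT.fAlg (a ⊔ 0) ((-a) ⊔ 0) ((-a) ⊔ 0) h0 le_sup_right
  rw [inf_comm] at h1
  have h2 := hT.fAlg ((-a) ⊔ 0) (((-a) ⊔ 0) * (a ⊔ 0)) (a ⊔ 0) h1 le_sup_right
  rw [mul_comm ((-a) ⊔ 0) (a ⊔ 0), inf_idem] at h2
  exact h2

theorem my_posPart_sub (hT : IsCondExp T L1) (a : E) : (a ⊔ 0) - ((-a) ⊔ 0) = a := by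
  haveI := my_cov1 hT; haveI := my_cov2 hT
  simpa [posPart_def, negPart_def] using posPart_sub_negPart a

theorem my_sq_nonneg (hT : IsCondExp T L1) (a : E) : 0 ≤ a * a := by
  have hd := my_posPart_sub hT a
  have key : ((a ⊔ 0) - ((-a) ⊔ 0)) * ((a ⊔ 0) - ((-a) ⊔ 0))
      = (a ⊔ 0) * (a ⊔ 0) + ((-a) ⊔ 0) * ((-a) ⊔ 0) := by
    linear_combination (-2 : E) * (my_orth hT a)
  rw [hd] at key
  rw [key]
  haveI := my_cov1 hT
  exact add_nonneg (hT.mulPos _ _ le_sup_right le_sup_right)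
    (hT.mulPos _ _ le_sup_right le_sup_right)


theorem my_nsmul_nonneg (hT : IsCondExp T L1) {a : E} (ha : 0 ≤ a) (n : ℕ) : 0 ≤ n • a := by
  haveI := my_cov1 hT
  induction n with
  | zero => simp
  | succ k ih => rw [succ_nsmul]; exact add_nonneg ih ha

theorem my_nsmul_le (hT : IsCondExp T L1) {a b : E} (h : a ≤ b) (n : ℕ) : n • a ≤ n • b := by
  haveI := my_cov1 hT; haveI := my_cov2 hT
  induction n with
  | zero => simp
  | succ k ih => rw [succ_nsmul, succ_nsmul]; exact add_le_add ih h

theorem my_nsmul_mono (hT : IsCondExp T L1) {a : E} (ha : 0 ≤ a) {n m : ℕ} (h : n ≤ m) :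
    n • a ≤ m • a := by
  haveI := my_cov1 hT
  obtain ⟨k, rfl⟩ := Nat.exists_eq_add_of_le h
  rw [add_nsmul]
  exact le_add_of_nonneg_right (my_nsmul_nonneg hT ha k)

theorem my_arch (hT : IsCondExp T L1) {a b : E} (ha : 0 ≤ a) (h : ∀ n : ℕ, n • a ≤ b) :
    a = 0 := by
  haveI := my_cov1 hT; haveI := my_cov2 hT
  set S : Set E := Set.range (fun n : ℕ => n • a) with hS
  have hne : S.Nonempty := ⟨0 • a, 0, rfl⟩
  have hbdd : BddAbove S := ⟨b, by rintro v ⟨n, rfl⟩; exact h n⟩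
  have hlub : IsLUB S (sSup S) := isLUB_csSup hne hbdd
  have hub : sSup S - a ∈ upperBounds S := by
    rintro v ⟨n, rfl⟩
    have h1 : (n + 1) • a ≤ sSup S := hlub.1 ⟨n + 1, rfl⟩
    rw [succ_nsmul] at h1
    exact le_sub_iff_add_le.mpr h1
  have h2 : sSup S ≤ sSup S - a := hlub.2 hub
  have h3 : a ≤ 0 := by
    have := sub_nonneg.mpr h2
    rw [sub_sub_cancel_left] at this
    exact neg_nonneg.mp this
  exact le_antisymm h3 ha

theorem my_semiprime (hT : IsCondExp T L1) {a : E} (ha : 0 ≤ a) (h2 : a * a = 0) : a = 0 := by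
  haveI := my_cov1 hT; haveI := my_cov2 hT
  refine my_arch hT ha (b := 1) (fun n => ?_)
  have hsq : (0:E) ≤ (1 - n • a) * (1 - n • a) := my_sq_nonneg hT _
  have hexp : (1 - n • a) * (1 - n • a) = 1 - n • a - n • a := by
    rw [nsmul_eq_mul]
    linear_combination ((n : E) * (n : E)) * h2
  rw [hexp] at hsq
  have h4 : n • a + n • a ≤ 1 := by
    have := sub_nonneg.mp (by rwa [sub_sub] at hsq)
    exact this
  exact le_trans (le_add_of_nonneg_left (my_nsmul_nonneg hT ha n)) h4

theorem my_l2solid (hT : IsCondExp T L1) {x a : E} (hx : x ∈ L2 L1) (ha0 : 0 ≤ a)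
    (hax : a ≤ x) : a ∈ L2 L1 := by
  haveI := my_cov1 hT; haveI := my_cov2 hT
  have hx0 : 0 ≤ x := le_trans ha0 hax
  constructor
  · exact hT.l1sol x hx.1 a (by rw [abs_of_nonneg ha0, abs_of_nonneg hx0]; exact hax)
  · refine hT.l1sol (x * x) hx.2 (a * a) ?_
    rw [abs_of_nonneg (hT.mulPos a a ha0 ha0), abs_of_nonneg (hT.mulPos x x hx0 hx0)]
    exact le_trans (my_mul_le_mul hT a ha0 hax) (my_mul_le_mul' hT x hx0 hax)

theorem my_sup_eq (hT : IsCondExp T L1) (a b : E) : a ⊔ b = a + ((b - a) ⊔ 0) := by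
  haveI := my_cov1 hT; haveI := my_cov2 hT
  rw [add_sup, add_sub_cancel, add_zero, sup_comm]

theorem my_inf_eq (hT : IsCondExp T L1) (a b : E) : a ⊓ b = a - ((a - b) ⊔ 0) := by
  haveI := my_cov1 hT; haveI := my_cov2 hT
  rw [inf_comm a b]
  have h1 : b ⊓ a + (b ⊔ a) = b + a := inf_add_sup b a
  rw [my_sup_eq hT b a] at h1
  rw [eq_sub_of_add_eq h1]
  ring


/-- Key lemma: `T((h ⊔ 0) x)` is the least upper bound of `{T(hz) : 0 ≤ z ≤ x, z ∈ L²}`. -/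
theorem my_key (hT : IsCondExp T L1) {h x c : E} (hx2 : x ∈ L2 L1) (hx0 : 0 ≤ x)
    (hc : ∀ z ∈ L2 L1, 0 ≤ z → z ≤ x → T (h * z) ≤ c) : T ((h ⊔ 0) * x) ≤ c := by
  haveI := my_cov1 hT; haveI := my_cov2 hT
  set p : E := h ⊔ 0 with hp
  set q : E := (-h) ⊔ 0 with hq
  have hp0 : 0 ≤ p := le_sup_right
  have hq0 : 0 ≤ q := le_sup_right
  have hpq : p * q = 0 := my_orth hT h
  have hhpq : p - q = h := my_posPart_sub hT h
  set w : ℕ → E := fun n => (x - n • p) ⊔ 0 with hw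
  set u : ℕ → E := fun n => p * w n with hu
  set z : ℕ → E := fun n => x ⊓ (n • p) with hz
  have hw0 : ∀ n, 0 ≤ w n := fun n => le_sup_right
  have hwx : ∀ n, w n ≤ x := fun n =>
    sup_le (sub_le_self x (my_nsmul_nonneg hT hp0 n)) hx0
  have hu0 : ∀ n, 0 ≤ u n := fun n => hT.mulPos _ _ hp0 (hw0 n)
  have hz0 : ∀ n, 0 ≤ z n := fun n => le_inf hx0 (my_nsmul_nonneg hT hp0 n)
  have hzx : ∀ n, z n ≤ x := fun n => inf_le_left
  have hz2 : ∀ n, z n ∈ L2 L1 := fun n => my_l2solid hT hx2 (hz0 n) (hzx n)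
  have hzw : ∀ n, z n = x - w n := fun n => my_inf_eq hT x (n • p)
  -- the identity n • u n = x * w n - w n * w n
  have hid : ∀ n : ℕ, n • u n = x * w n - w n * w n := by
    intro n
    have horth : w n * ((n • p - x) ⊔ 0) = 0 := by
      have := my_orth hT (x - n • p)
      rwa [neg_sub] at this
    have hsub : w n - ((n • p - x) ⊔ 0) = x - n • p := by
      have := my_posPart_sub hT (x - n • p)
      rwa [neg_sub] at this
    have hn : n • u n = (n • p) * w n := by
      rw [hu, nsmul_eq_mul, nsmul_eq_mul]; ring
    rw [hn]
    rw [nsmul_eq_mul] at hsub horth ⊢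
    linear_combination (w n) * hsub + horth
  -- the family u is directed downwards with infimum 0
  have hanti : Antitone u := by
    refine antitone_nat_of_succ_le (fun n => ?_)
    refine my_mul_le_mul hT p hp0 (sup_le_sup_right (sub_le_sub_left ?_ x) 0)
    exact my_nsmul_mono hT hp0 (Nat.le_succ n)
  set S : Set E := Set.range u with hS
  have hSne : S.Nonempty := ⟨u 0, 0, rfl⟩
  have hdir : DirectedOn (· ≥ ·) S := by
    rintro v1 ⟨m, rfl⟩ v2 ⟨n, rfl⟩
    exact ⟨u (max m n), ⟨max m n, rfl⟩, hanti (le_max_left m n), hanti (le_max_right m n)⟩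
  have hSpos : ∀ v ∈ S, 0 ≤ v := by rintro v ⟨n, rfl⟩; exact hu0 n
  have hglb : IsGLB S 0 := by
    constructor
    · rintro v ⟨n, rfl⟩; exact hu0 n
    · intro c' hc'
      have hd : (c' ⊔ 0) = 0 := by
        refine my_arch hT le_sup_right (b := x * x) (fun n => ?_)
        have h1 : c' ⊔ 0 ≤ u n := sup_le (hc' ⟨n, rfl⟩) (hu0 n)
        refine le_trans (my_nsmul_le hT h1 n) ?_
        rw [hid n]
        refine le_trans (sub_le_self _ (hT.mulPos _ _ (hw0 n) (hw0 n))) ?_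
        exact my_mul_le_mul hT x hx0 (hwx n)
      exact le_trans le_sup_left hd.le
  have hTglb : IsGLB (T '' S) 0 := hT.ordContT S hSne hdir hSpos hglb
  -- translate the bound
  have hTz : ∀ n : ℕ, T (h * z n) = T (p * x) - T (u n) := by
    intro n
    have hqz : q * z n = 0 := by
      have hle : q * z n ≤ q * (n • p) := my_mul_le_mul hT q hq0 inf_le_right
      have hqp : q * (n • p) = 0 := by
        rw [nsmul_eq_mul]
        linear_combination (n : E) * hpq
      exact le_antisymm (hqp ▸ hle) (hT.mulPos _ _ hq0 (hz0 n))
    rw [hzw n] at hqz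
    have hhz : h * z n = p * x - u n := by
      rw [hzw n, hu]
      simp only
      linear_combination (-(x - w n)) * hhpq - hqz
    rw [hhz, my_Tsub hT]
  have hlb : T (p * x) - c ∈ lowerBounds (T '' S) := by
    rintro v ⟨v', ⟨n, rfl⟩, rfl⟩
    have h1 : T (h * z n) ≤ c := hc (z n) (hz2 n) (hz0 n) (hzx n)
    rw [hTz n] at h1
    exact sub_le_comm.mp h1
  have h2 : T (p * x) - c ≤ 0 := hTglb.2 hlb
  exact sub_nonpos.mp h2


theorem my_RK_lub (hT : IsCondExp T L1) (f g : E) {x : E} (hx2 : x ∈ L2 L1) (hx0 : 0 ≤ x) :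
    IsLUB (RKset L1 (Psi T f) (Psi T g) x) (Psi T (f ⊔ g) x) := by
  haveI := my_cov1 hT; haveI := my_cov2 hT
  constructor
  · rintro v ⟨y, z, hy2, hz2, hy0, hz0, hyz, rfl⟩
    show T (f * y) + T (g * z) ≤ T ((f ⊔ g) * x)
    have h1 : T (f * y) ≤ T ((f ⊔ g) * y) :=
      my_Tmono hT (my_mul_le_mul' hT y hy0 le_sup_left)
    have h2 : T (g * z) ≤ T ((f ⊔ g) * z) :=
      my_Tmono hT (my_mul_le_mul' hT z hz0 le_sup_right)
    calc T (f * y) + T (g * z) ≤ T ((f ⊔ g) * y) + T ((f ⊔ g) * z) := add_le_add h1 h2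
      _ = T ((f ⊔ g) * x) := by rw [← hT.addT, ← mul_add, hyz]
  · intro b hb
    have hkey : T (((g - f) ⊔ 0) * x) ≤ b - T (f * x) := by
      refine my_key hT hx2 hx0 (fun z hz2 hz0 hzx => ?_)
      have hy0 : (0:E) ≤ x - z := sub_nonneg.mpr hzx
      have hy2 : x - z ∈ L2 L1 := my_l2solid hT hx2 hy0 (sub_le_self x hz0)
      have hv : Psi T f (x - z) + Psi T g z ≤ b :=
        hb ⟨x - z, z, hy2, hz2, hy0, hz0, by ring, rfl⟩
      have he : Psi T f (x - z) + Psi T g z = T (f * x) + T ((g - f) * z) := by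
        show T (f * (x - z)) + T (g * z) = T (f * x) + T ((g - f) * z)
        rw [show f * (x - z) = f * x - f * z by ring, my_Tsub hT,
          show (g - f) * z = g * z - f * z by ring, my_Tsub hT]
        ring
      rw [he] at hv
      exact le_sub_iff_add_le'.mpr hv
    show T ((f ⊔ g) * x) ≤ b
    rw [my_sup_eq hT f g, add_mul, hT.addT]
    calc T (f * x) + T (((g - f) ⊔ 0) * x) ≤ T (f * x) + (b - T (f * x)) :=
          add_le_add le_rfl hkey
      _ = b := by ring

theorem my_RK_glb (hT : IsCondExp T L1) (f g : E) {x : E} (hx2 : x ∈ L2 L1) (hx0 : 0 ≤ x) :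
    IsGLB (RKset L1 (Psi T f) (Psi T g) x) (Psi T (f ⊓ g) x) := by
  haveI := my_cov1 hT; haveI := my_cov2 hT
  constructor
  · rintro v ⟨y, z, hy2, hz2, hy0, hz0, hyz, rfl⟩
    show T ((f ⊓ g) * x) ≤ T (f * y) + T (g * z)
    have h1 : T ((f ⊓ g) * y) ≤ T (f * y) :=
      my_Tmono hT (my_mul_le_mul' hT y hy0 inf_le_left)
    have h2 : T ((f ⊓ g) * z) ≤ T (g * z) :=
      my_Tmono hT (my_mul_le_mul' hT z hz0 inf_le_right)
    calc T ((f ⊓ g) * x) = T ((f ⊓ g) * y) + T ((f ⊓ g) * z) := by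
          rw [← hT.addT, ← mul_add, hyz]
      _ ≤ T (f * y) + T (g * z) := add_le_add h1 h2
  · intro b hb
    have hkey : T (((f - g) ⊔ 0) * x) ≤ T (f * x) - b := by
      refine my_key hT hx2 hx0 (fun z hz2 hz0 hzx => ?_)
      have hy0 : (0:E) ≤ x - z := sub_nonneg.mpr hzx
      have hy2 : x - z ∈ L2 L1 := my_l2solid hT hx2 hy0 (sub_le_self x hz0)
      have hv : b ≤ Psi T f (x - z) + Psi T g z :=
        hb ⟨x - z, z, hy2, hz2, hy0, hz0, by ring, rfl⟩
      have he : Psi T f (x - z) + Psi T g z = T (f * x) - T ((f - g) * z) := by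
        show T (f * (x - z)) + T (g * z) = T (f * x) - T ((f - g) * z)
        rw [show f * (x - z) = f * x - f * z by ring, my_Tsub hT,
          show (f - g) * z = f * z - g * z by ring, my_Tsub hT]
        ring
      rw [he] at hv
      exact le_sub_comm.mp hv
    show b ≤ T ((f ⊓ g) * x)
    rw [my_inf_eq hT f g, sub_mul, my_Tsub hT]
    exact le_sub_comm.mp hkey


theorem my_pos_iff (hT : IsCondExp T L1) {f : E} (hf : f ∈ L2 L1) :
    0 ≤ f ↔ leF L1 (fun _ => 0) (Psi T f) := by
  haveI := my_cov1 hT; haveI := my_cov2 hT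
  constructor
  · intro hf0 x hx2 hx0
    exact hT.posT _ (hT.mulPos f x hf0 hx0)
  · intro hle
    set p : E := f ⊔ 0 with hp
    set q : E := (-f) ⊔ 0 with hq
    have hp0 : 0 ≤ p := le_sup_right
    have hq0 : 0 ≤ q := le_sup_right
    have hpq : p * q = 0 := my_orth hT f
    have hd : p - q = f := my_posPart_sub hT f
    have hsq : f * f = p * p + q * q := by linear_combination (-(2:E)) * hpq - (f + p - q) * hd
    have hq2 : q ∈ L2 L1 := by
      constructor
      · refine hT.l1sol f hf.1 q ?_
        rw [abs_of_nonneg hq0]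
        exact sup_le (neg_le_abs f) (abs_nonneg f)
      · refine hT.l1sol (f * f) hf.2 (q * q) ?_
        rw [abs_of_nonneg (hT.mulPos q q hq0 hq0), abs_of_nonneg (hsq ▸
          add_nonneg (hT.mulPos p p hp0 hp0) (hT.mulPos q q hq0 hq0))]
        rw [hsq]
        exact le_add_of_nonneg_left (hT.mulPos p p hp0 hp0)
    have h1 : (0:E) ≤ T (f * q) := hle q hq2 hq0
    have h2 : f * q = -(q * q) := by linear_combination (-q) * hd + hpq
    rw [h2, my_Tneg hT] at h1
    have h3 : T (q * q) = 0 :=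
      le_antisymm (neg_nonneg.mp h1) (hT.posT _ (hT.mulPos q q hq0 hq0))
    have h4 : q = 0 := my_semiprime hT hq0 (hT.strictT _ (hT.mulPos q q hq0 hq0) h3)
    have h5 : -f ≤ 0 := sup_eq_right.mp (hq ▸ h4)
    exact neg_nonpos.mp h5

end Helpers

/-- The Riesz representation map `Ψ(f)(g) = T(fg)` restricts to a
bijection between the positive cones of `L²(T)` and `Ê`, and is a lattice
isomorphism: `Ψ(f ∨ g) = Ψ(f) ∨ Ψ(g)`, `Ψ(f ∧ g) = Ψ(f) ∧ Ψ(g)` and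
`Ψ(f^±) = Ψ(f)^±` (with the Riesz–Kantorovich lattice operations on `Ê`). -/
theorem stmt8 (T : E → E) (L1 : Set E) (hT : IsCondExp T L1)
    (sqrt : E → E) (hsqrt : IsSqrt sqrt) :
    -- `Ψ` maps `E₊` onto `Ê₊` (being already a bijection of `E` onto `Ê`)
    (∀ f ∈ L2 L1, (0 ≤ f ↔ leF L1 (fun _ => 0) (Psi T f))) ∧
    -- `Ψ(f ∨ g) = Ψ(f) ∨ Ψ(g)` and `Ψ(f ∧ g) = Ψ(f) ∧ Ψ(g)`
    (∀ f ∈ L2 L1, ∀ g ∈ L2 L1, ∀ x ∈ L2 L1, 0 ≤ x →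
      IsLUB (RKset L1 (Psi T f) (Psi T g) x) (Psi T (f ⊔ g) x) ∧
      IsGLB (RKset L1 (Psi T f) (Psi T g) x) (Psi T (f ⊓ g) x)) ∧
    -- `Ψ(f⁺) = Ψ(f)⁺ = Ψ(f) ∨ 0` and `Ψ(f⁻) = Ψ(f)⁻ = (-Ψ(f)) ∨ 0`
    (∀ f ∈ L2 L1, ∀ x ∈ L2 L1, 0 ≤ x →
      IsLUB (RKset L1 (Psi T f) (fun _ => 0) x) (Psi T (f ⊔ 0) x) ∧
      IsLUB (RKset L1 (fun y => -(Psi T f y)) (fun _ => 0) x) (Psi T ((-f) ⊔ 0) x)) := by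
  have h0 : (fun _ : E => (0:E)) = Psi T 0 := by
    funext y
    show (0:E) = T (0 * y)
    rw [zero_mul, my_T0 hT]
  refine ⟨fun f hf => my_pos_iff hT hf,
    fun f hf g hg x hx2 hx0 => ⟨my_RK_lub hT f g hx2 hx0, my_RK_glb hT f g hx2 hx0⟩,
    fun f hf x hx2 hx0 => ⟨?_, ?_⟩⟩
  · rw [h0]
    exact my_RK_lub hT f 0 hx2 hx0
  · have hneg : (fun y => -(Psi T f y)) = Psi T (-f) := by
      funext y
      show -(T (f * y)) = T ((-f) * y)
      rw [neg_mul, my_Tneg hT]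
    rw [h0, hneg]
    exact my_RK_lub hT (-f) 0 hx2 hx0
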